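/- Let L be the Laplacian matrix of a connected graph G on n vertices with characteristic polynomial φ_L(λ) = λ·ξ(λ), and let U be an orthonormal eigenvector matrix of L whose first column is the constant vector 1/√n. If the Galois group of ξ (acting on the n−1 roots of ξ) is m-homogeneous for every m, e.g., contains A_{n−1}, then all minors of U of every size are nonzero. -/

import Mathlib

open Matrix Polynomial

/-- If all maximal "minors" (with arbitrary column selections) of an `m × α` matrix vanish,
then its rows are linearly dependent. -/
lemma aux_LD {F : Type*} [Field F] {α : Type*} [Fintype α] [DecidableEq α] :
    ∀ {m : ℕ} (A : Matrix (Fin m) α F),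
      (∀ t : Fin m → α, (A.submatrix id t).det = 0) →
      ∃ a : Fin m → F, a ≠ 0 ∧ ∀ j, ∑ k, a k * A k j = 0 := by
  intro m
  induction m with
  | zero =>
      intro A h
      have := h (fun i => i.elim0)
      simp [Matrix.det_fin_zero] at this
  | succ m ih =>
      intro A h
      by_cases hex : ∃ t' : Fin m → α,
          ((A.submatrix Fin.castSucc id).submatrix id t').det ≠ 0
      · obtain ⟨t', ht'⟩ := hex
        refine ⟨fun i => (-1 : F) ^ ((i : ℕ) + m) * (A.submatrix i.succAbove t').det, ?_, ?_⟩
        · intro h0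
          apply ht'
          have h1 := congrFun h0 (Fin.last m)
          simp only [Pi.zero_apply, Fin.val_last] at h1
          have hsub : A.submatrix (Fin.last m).succAbove t'
              = (A.submatrix Fin.castSucc id).submatrix id t' := by
            rw [Matrix.submatrix_submatrix, Fin.succAbove_last]
            rfl
          rw [hsub] at h1
          rcases mul_eq_zero.mp h1 with h2 | h2
          · exact absurd h2 (pow_ne_zero _ (by norm_num))
          · exact h2
        · intro j
          have key : (A.submatrix id (Fin.snoc t' j)).det
              = ∑ i : Fin (m + 1), ((-1 : F) ^ ((i : ℕ) + m) * (A.submatrix i.succAbove t').det) * A i j := by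
            rw [Matrix.det_succ_column (A.submatrix id (Fin.snoc t' j)) (Fin.last m)]
            refine Finset.sum_congr rfl fun i _ => ?_
            have hsub : (A.submatrix id (Fin.snoc t' j)).submatrix i.succAbove
                (Fin.last m).succAbove = A.submatrix i.succAbove t' := by
              rw [Matrix.submatrix_submatrix, Fin.succAbove_last]
              have hsn : (Fin.snoc t' j ∘ Fin.castSucc : Fin m → α) = t' := by
                funext k
                simp [Fin.snoc_castSucc]
              rw [hsn]
              rfl
            rw [hsub]
            simp only [Matrix.submatrix_apply, id_eq, Fin.snoc_last, Fin.val_last]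
            ring
          show ∑ i : Fin (m + 1), ((-1 : F) ^ ((i : ℕ) + m) * (A.submatrix i.succAbove t').det) * A i j = 0
          rw [← key, h (Fin.snoc t' j)]
      · push_neg at hex
        obtain ⟨a', ha0, ha⟩ := ih _ hex
        refine ⟨Fin.snoc a' 0, ?_, ?_⟩
        · intro h0
          apply ha0
          funext k
          have := congrFun h0 (Fin.castSucc k)
          rwa [Fin.snoc_castSucc] at this
        · intro j
          rw [Fin.sum_univ_castSucc]
          simp only [Fin.snoc_castSucc, Fin.snoc_last, zero_mul, add_zero]
          have := ha j
          simpa [Matrix.submatrix_apply] using this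

/-- Evaluation of the characteristic polynomial. -/
lemma aux_eval_charpoly {n' : Type*} [DecidableEq n'] [Fintype n'] {K : Type*} [CommRing K]
    (M : Matrix n' n' K) (t : K) :
    M.charpoly.eval t = (t • (1 : Matrix n' n' K) - M).det := by
  rw [Matrix.charpoly, ← Polynomial.coe_evalRingHom, RingHom.map_det]
  congr 1
  ext i j
  by_cases h : i = j
  · subst h
    simp [Matrix.charmatrix_apply_eq, Matrix.one_apply_eq]
  · simp [Matrix.charmatrix_apply_ne _ _ _ h, Matrix.one_apply_ne h, h]

/-- The Laplacian matrix is compatible with ring homomorphisms out of `ℚ`. -/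
lemma aux_lap_map {n : ℕ} (G : SimpleGraph (Fin n)) [DecidableRel G.Adj] {R : Type*} [Ring R]
    (f : ℚ →+* R) : (G.lapMatrix ℚ).map f = G.lapMatrix R := by
  ext i j
  simp [SimpleGraph.lapMatrix, SimpleGraph.degMatrix, Matrix.map_apply, Matrix.sub_apply,
    Matrix.diagonal, SimpleGraph.adjMatrix, Matrix.of_apply, apply_ite f, map_natCast f]

/-- For a connected graph `G` with Laplacian characteristic polynomial
`φ_L = X·ξ`, if the Galois group of `ξ` (acting on the `n-1` roots of `ξ`) is `m`-homogeneous
for every `m`, then all minors of every size of the orthonormal eigenvector matrix `U`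
(whose first column is the constant vector `1/√n`) are nonzero. -/
theorem stmt_13 {n : ℕ} [NeZero n] (G : SimpleGraph (Fin n)) [DecidableRel G.Adj]
    (hconn : G.Connected)
    (ξ : Polynomial ℚ)
    (hfac : (G.lapMatrix ℚ).charpoly = Polynomial.X * ξ)
    {L : Type*} [Field L] [DecidableEq L] [Algebra ℚ L]
    (lamL : Fin n → L) (ι : L →+* ℝ) (lam : Fin n → ℝ)
    (hι : ∀ i, ι (lamL i) = lam i)
    (hroot : ∀ i : Fin n, i ≠ 0 → Polynomial.aeval (lamL i) ξ = 0)
    (hdist : Function.Injective lam) (hlam0 : lam 0 = 0)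
    (U : Matrix (Fin n) (Fin n) ℝ) (hU : U.transpose * U = 1)
    (hU0 : ∀ v, U v 0 = 1 / Real.sqrt n)
    (heig : ∀ i, (G.lapMatrix ℝ).mulVec (fun v => U v i) = lam i • (fun v => U v i))
    (hhom : ∀ S S' : Finset (Fin n), 0 ∉ S → 0 ∉ S' → S.card = S'.card →
      ∃ g : L ≃ₐ[ℚ] L, (S.image lamL).image g = S'.image lamL) :
    ∀ (m : ℕ) (w s : Fin m → Fin n), Function.Injective w → Function.Injective s →
      (U.submatrix w s).det ≠ 0 := by
  intro m w s hw hs hdet0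
  -- ## basic facts
  have hn : 0 < n := Nat.pos_of_ne_zero (NeZero.ne n)
  have hsqrt : Real.sqrt n ≠ 0 := by
    have h1 : (0:ℝ) < n := by exact_mod_cast hn
    positivity
  have hU00ne : ∀ v, U v 0 ≠ 0 := by
    intro v
    rw [hU0 v]
    exact one_div_ne_zero hsqrt
  have hιinj : Function.Injective ι := ι.injective
  have hlamLinj : Function.Injective lamL := by
    intro i j hij
    apply hdist
    rw [← hι, ← hι, hij]
  set ML : Matrix (Fin n) (Fin n) L := (G.lapMatrix ℚ).map (algebraMap ℚ L) with hML
  have hmapι : ML.map ι = G.lapMatrix ℝ := by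
    rw [hML, Matrix.map_map]
    exact aux_lap_map G (ι.comp (algebraMap ℚ L))
  have hMs : ∀ a b, G.lapMatrix ℝ a b = G.lapMatrix ℝ b a := by
    intro a b
    have h1 := (SimpleGraph.isSymm_lapMatrix G (R := ℝ))
    have := congrFun (congrFun h1 b) a
    simpa [Matrix.transpose_apply] using this
  have hUUT : U * Uᵀ = 1 := mul_eq_one_comm.mp hU
  have horth : ∀ v v' : Fin n, ∑ j, U v j * U v' j = if v = v' then (1:ℝ) else 0 := by
    intro v v'
    have h1 := congrFun (congrFun hUUT v) v'
    simpa [Matrix.mul_apply, Matrix.one_apply, Matrix.transpose_apply] using h1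
  -- ## kernel of the Laplacian over ℝ at eigenvalue `lam i` is spanned by column `i` of `U`
  have hkerR : ∀ (i : Fin n) (x : Fin n → ℝ),
      (G.lapMatrix ℝ).mulVec x = lam i • x → ∃ c : ℝ, ∀ v, x v = c * U v i := by
    intro i x hx
    set y : Fin n → ℝ := fun j => ∑ v, U v j * x v with hy
    have hy0 : ∀ j, j ≠ i → y j = 0 := by
      intro j hj
      have h1 : ∑ v, U v j * ((G.lapMatrix ℝ).mulVec x) v = lam j * y j := by
        calc ∑ v, U v j * ((G.lapMatrix ℝ).mulVec x) v
            = ∑ v, ∑ u, U v j * (G.lapMatrix ℝ v u * x u) := by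
              refine Finset.sum_congr rfl fun v _ => ?_
              rw [Matrix.mulVec, dotProduct, Finset.mul_sum]
          _ = ∑ u, (∑ v, G.lapMatrix ℝ u v * U v j) * x u := by
              rw [Finset.sum_comm]
              refine Finset.sum_congr rfl fun u _ => ?_
              rw [Finset.sum_mul]
              refine Finset.sum_congr rfl fun v _ => ?_
              rw [hMs u v]
              ring
          _ = ∑ u, (lam j * U u j) * x u := by
              refine Finset.sum_congr rfl fun u _ => ?_
              have h2 := congrFun (heig j) u
              simp only [Matrix.mulVec, dotProduct, Pi.smul_apply, smul_eq_mul] at h2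
              rw [h2]
          _ = lam j * y j := by
              rw [hy, Finset.mul_sum]
              exact Finset.sum_congr rfl fun u _ => by ring
      have h2 : ∑ v, U v j * ((G.lapMatrix ℝ).mulVec x) v = lam i * y j := by
        rw [hx, hy, Finset.mul_sum]
        exact Finset.sum_congr rfl fun u _ => by
          simp only [Pi.smul_apply, smul_eq_mul]; ring
      have h3 : (lam j - lam i) * y j = 0 := by
        have h4 := h1.symm.trans h2
        linear_combination h4
      rcases mul_eq_zero.mp h3 with h5 | h5
      · exact absurd h5 (sub_ne_zero.mpr fun hh => hj (hdist hh))
      · exact h5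
    refine ⟨y i, fun v => ?_⟩
    have hxv : x v = ∑ j, U v j * y j := by
      calc x v = ∑ v', (if v = v' then (1:ℝ) else 0) * x v' := by
            simp [ite_mul]
        _ = ∑ v', (∑ j, U v j * U v' j) * x v' := by
            refine Finset.sum_congr rfl fun v' _ => ?_
            rw [horth v v']
        _ = ∑ v', ∑ j, U v j * U v' j * x v' := by
            refine Finset.sum_congr rfl fun v' _ => ?_
            rw [Finset.sum_mul]
        _ = ∑ j, ∑ v', U v j * U v' j * x v' := Finset.sum_comm
        _ = ∑ j, U v j * y j := by
            refine Finset.sum_congr rfl fun j _ => ?_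
            simp only [hy]
            rw [Finset.mul_sum]
            exact Finset.sum_congr rfl fun v' _ => by ring
    rw [hxv, Finset.sum_eq_single i]
    · ring
    · intro j _ hj
      rw [hy0 j hj, mul_zero]
    · intro hmem
      exact absurd (Finset.mem_univ i) hmem
  -- ## algebraic eigenvectors over L
  have hdetL : ∀ i : Fin n, i ≠ 0 → ((lamL i) • (1 : Matrix (Fin n) (Fin n) L) - ML).det = 0 := by
    intro i hi
    have h1 : ML.charpoly = ((G.lapMatrix ℚ).charpoly).map (algebraMap ℚ L) :=
      Matrix.charpoly_map _ _
    have h2 : ML.charpoly.eval (lamL i) = 0 := by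
      rw [h1, hfac, Polynomial.eval_map, ← Polynomial.aeval_def, _root_.map_mul, Polynomial.aeval_X,
        hroot i hi, mul_zero]
    rw [← aux_eval_charpoly, h2]
  have hvex : ∀ i : Fin n, ∃ v : Fin n → L, i ≠ 0 → (v ≠ 0 ∧ ML.mulVec v = lamL i • v) := by
    intro i
    by_cases hi : i = 0
    · exact ⟨0, fun h => absurd hi h⟩
    · obtain ⟨v, hv0, hv⟩ := Matrix.exists_mulVec_eq_zero_iff.mpr (hdetL i hi)
      refine ⟨v, fun _ => ⟨hv0, ?_⟩⟩
      rw [Matrix.sub_mulVec, Matrix.smul_mulVec, Matrix.one_mulVec] at hv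
      exact (sub_eq_zero.mp hv).symm
  choose vv hvv using hvex
  -- ## relating algebraic eigenvectors to real ones
  have hrep : ∀ (j : Fin n) (z : Fin n → L), ML.mulVec z = lamL j • z →
      ∃ c : ℝ, (∀ x, ι (z x) = c * U x j) ∧ (z ≠ 0 → c ≠ 0) := by
    intro j z hz
    have hR : (G.lapMatrix ℝ).mulVec (fun x => ι (z x)) = lam j • (fun x => ι (z x)) := by
      funext v
      have h0 := congrFun hz v
      have h1 : (G.lapMatrix ℝ).mulVec (fun x => ι (z x)) v = ι (ML.mulVec z v) := by
        rw [← hmapι]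
        simp only [Matrix.mulVec, dotProduct, Matrix.map_apply, _root_.map_sum, _root_.map_mul]
      rw [h1, h0]
      simp only [Pi.smul_apply, smul_eq_mul, _root_.map_mul, hι j]
    obtain ⟨c, hc⟩ := hkerR j _ hR
    refine ⟨c, hc, ?_⟩
    intro hz0 hc0
    apply hz0
    funext x
    have h2 := hc x
    rw [hc0, zero_mul] at h2
    apply hιinj
    simp only [Pi.zero_apply, map_zero]
    exact h2
  have hccex : ∀ i : Fin n, ∃ c : ℝ, i ≠ 0 → (c ≠ 0 ∧ ∀ x, ι (vv i x) = c * U x i) := by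
    intro i
    by_cases hi : i = 0
    · exact ⟨1, fun h => absurd hi h⟩
    · obtain ⟨hv0, hveq⟩ := hvv i hi
      obtain ⟨c, hc1, hc2⟩ := hrep i (vv i) hveq
      exact ⟨c, fun _ => ⟨hc2 hv0, hc1⟩⟩
  choose cc hcc using hccex
  -- ## Galois equivariance: automorphisms permute the eigenvectors projectively
  have hprop : ∀ (σ : L ≃ₐ[ℚ] L) (i j : Fin n), i ≠ 0 → j ≠ 0 → σ (lamL i) = lamL j →
      ∃ d : L, d ≠ 0 ∧ ∀ x, σ (vv i x) = d * vv j x := by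
    intro σ i j hi hj hσ
    obtain ⟨hvi0, hvi⟩ := hvv i hi
    obtain ⟨hvj0, hvj⟩ := hvv j hj
    have hσM : ∀ a b, σ (ML a b) = ML a b := by
      intro a b
      rw [hML]
      simp only [Matrix.map_apply]
      exact σ.commutes _
    have hwv : ML.mulVec (fun x => σ (vv i x)) = lamL j • (fun x => σ (vv i x)) := by
      funext v
      have h0 := congrFun hvi v
      have h1 : ML.mulVec (fun x => σ (vv i x)) v = σ (ML.mulVec (vv i) v) := by
        simp only [Matrix.mulVec, dotProduct, _root_.map_sum, _root_.map_mul]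
        refine Finset.sum_congr rfl fun u _ => ?_
        rw [hσM v u]
      rw [h1, h0]
      simp only [Pi.smul_apply, smul_eq_mul, _root_.map_mul, hσ]
    have hw0 : (fun x => σ (vv i x)) ≠ (0 : Fin n → L) := by
      intro h0
      apply hvi0
      funext x
      have h1 := congrFun h0 x
      simp only [Pi.zero_apply] at h1
      have := σ.injective (h1.trans (map_zero σ).symm)
      simpa using this
    obtain ⟨c1, hc1eq, hc1ne'⟩ := hrep j _ hwv
    have hc1ne : c1 ≠ 0 := hc1ne' hw0
    have hc2ne := (hcc j hj).1
    have hc2eq := (hcc j hj).2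
    obtain ⟨x₀, hx₀⟩ : ∃ x, vv j x ≠ 0 := by
      by_contra hco
      push_neg at hco
      exact hvj0 (funext hco)
    have hUx₀ : U x₀ j ≠ 0 := by
      intro h0
      apply hx₀
      apply hιinj
      rw [hc2eq x₀, h0, mul_zero, map_zero]
    refine ⟨σ (vv i x₀) / vv j x₀, ?_, ?_⟩
    · apply div_ne_zero _ hx₀
      intro h0
      have h1 := hc1eq x₀
      rw [h0, map_zero] at h1
      exact (mul_ne_zero hc1ne hUx₀) h1.symm
    · intro x
      apply hιinj
      rw [_root_.map_mul, map_div₀, hc1eq x, hc1eq x₀, hc2eq x, hc2eq x₀]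
      field_simp
  -- ## determinant scaling identity (columns avoiding 0)
  have hscale : ∀ t : Fin m → Fin n, (∀ k, t k ≠ 0) →
      (U.submatrix w t).det
        = ι ((Matrix.of fun k j : Fin m => vv (t j) (w k)).det) * ∏ j, (cc (t j))⁻¹ := by
    intro t ht
    have hmat : U.submatrix w t
        = ((Matrix.of fun k j : Fin m => vv (t j) (w k)).map ι)
            * Matrix.diagonal (fun j => (cc (t j))⁻¹) := by
      ext k j
      rw [Matrix.mul_diagonal]
      simp only [Matrix.map_apply, Matrix.submatrix_apply, Matrix.of_apply]
      rw [(hcc (t j) (ht j)).2 (w k)]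
      field_simp
      rw [mul_div_cancel_right₀ _ (hcc (t j) (ht j)).1]
    rw [hmat, Matrix.det_mul, Matrix.det_diagonal]
    congr 1
    rw [RingHom.map_det ι, RingHom.mapMatrix_apply]
  -- ## endgame helpers
  have hbrep : ∀ a : Fin m → ℝ, ∀ v,
      (∑ k, a k * (if w k = v then (1:ℝ) else 0))
        = ∑ j, (∑ k, a k * U (w k) j) * U v j := by
    intro a v
    calc ∑ k, a k * (if w k = v then (1:ℝ) else 0)
        = ∑ k, a k * ∑ j, U (w k) j * U v j := by
          refine Finset.sum_congr rfl fun k _ => ?_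
          rw [horth (w k) v]
      _ = ∑ k, ∑ j, a k * (U (w k) j * U v j) := by
          refine Finset.sum_congr rfl fun k _ => ?_
          rw [Finset.mul_sum]
      _ = ∑ j, ∑ k, a k * (U (w k) j * U v j) := Finset.sum_comm
      _ = ∑ j, (∑ k, a k * U (w k) j) * U v j := by
          refine Finset.sum_congr rfl fun j _ => ?_
          rw [Finset.sum_mul]
          exact Finset.sum_congr rfl fun k _ => by ring
  have hend : ∀ a : Fin m → ℝ, (∀ j, ∑ k, a k * U (w k) j = 0) → a = 0 := by
    intro a hall
    funext k₀
    have h1 : ∑ k, a k * (if w k = w k₀ then (1:ℝ) else 0) = 0 := by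
      rw [hbrep a (w k₀)]
      apply Finset.sum_eq_zero
      intro j _
      rw [hall j, zero_mul]
    rw [Finset.sum_eq_single k₀] at h1
    · rw [if_pos rfl, mul_one] at h1
      exact h1
    · intro k _ hk
      rw [if_neg (fun hh => hk (hw hh)), mul_zero]
    · intro hmem
      exact absurd (Finset.mem_univ k₀) hmem
  -- ## case split on whether column 0 of U occurs among the selected columns
  by_cases hz : ∃ k, s k = 0
  case neg =>
    -- Case A : all selected columns avoid the constant eigenvector
    push_neg at hz
    -- Galois transfer: every minor on rows `w` with columns avoiding 0 vanishes
    have htransA : ∀ t : Fin m → Fin n, Function.Injective t → (∀ k, t k ≠ 0) →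
        (U.submatrix w t).det = 0 := by
      intro t htinj ht0
      have hS : (0 : Fin n) ∉ Finset.univ.image s := by
        simp only [Finset.mem_image]
        rintro ⟨k, -, hk⟩
        exact hz k hk
      have hS' : (0 : Fin n) ∉ Finset.univ.image t := by
        simp only [Finset.mem_image]
        rintro ⟨k, -, hk⟩
        exact ht0 k hk
      have hcard : (Finset.univ.image s).card = (Finset.univ.image t).card := by
        rw [Finset.card_image_of_injective _ hs, Finset.card_image_of_injective _ htinj]
      obtain ⟨σ, hσ⟩ := hhom _ _ hS hS' hcard
      have hπex : ∀ k : Fin m, ∃ j : Fin n,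
          j ∈ Finset.univ.image t ∧ σ (lamL (s k)) = lamL j := by
        intro k
        have h1 : lamL (s k) ∈ (Finset.univ.image s).image lamL :=
          Finset.mem_image_of_mem _ (Finset.mem_image_of_mem _ (Finset.mem_univ k))
        have h2 : σ (lamL (s k)) ∈ ((Finset.univ.image s).image lamL).image σ :=
          Finset.mem_image_of_mem _ h1
        rw [hσ] at h2
        obtain ⟨j, hj1, hj2⟩ := Finset.mem_image.mp h2
        exact ⟨j, hj1, hj2.symm⟩
      choose π hπmem hπeq using hπex
      have hπinj : Function.Injective π := by
        intro k k' hkk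
        have h1 : σ (lamL (s k)) = σ (lamL (s k')) := by rw [hπeq, hπeq, hkk]
        exact hs (hlamLinj (σ.injective h1))
      have hπ0 : ∀ k, π k ≠ 0 := by
        intro k h0
        apply hS'
        rw [← h0]
        exact hπmem k
      have hτex : ∀ k : Fin m, ∃ k' : Fin m, t k' = π k := by
        intro k
        obtain ⟨k', -, hk'⟩ := Finset.mem_image.mp (hπmem k)
        exact ⟨k', hk'⟩
      choose τ hτ using hτex
      have hτinj : Function.Injective τ := by
        intro a b hab
        apply hπinj
        rw [← hτ, ← hτ, hab]
      have hτbij : Function.Bijective τ := Finite.injective_iff_bijective.mp hτinj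
      set e : Equiv.Perm (Fin m) := Equiv.ofBijective τ hτbij with he
      -- scaling factors for the images of the eigenvectors
      have hddex : ∀ k : Fin m, ∃ d : L, d ≠ 0 ∧ ∀ x, σ (vv (s k) x) = d * vv (π k) x :=
        fun k => hprop σ (s k) (π k) (hz k) (hπ0 k) (hπeq k)
      choose dd hdd0 hddeq using hddex
      -- determinant of the algebraic matrix for `s` vanishes
      have hprodne : (∏ j, (cc (s j))⁻¹) ≠ 0 :=
        Finset.prod_ne_zero_iff.mpr fun j _ => inv_ne_zero (hcc (s j) (hz j)).1
      have hVs : (Matrix.of fun k j : Fin m => vv (s j) (w k)).det = 0 := by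
        have h1 := hscale s hz
        rw [hdet0] at h1
        rcases mul_eq_zero.mp h1.symm with h | h
        · apply hιinj
          rw [h, map_zero]
        · exact absurd h hprodne
      -- apply σ entrywise
      have hmapσ : (Matrix.of fun k j : Fin m => vv (s j) (w k)).map σ
          = (Matrix.of fun k j : Fin m => vv (π j) (w k)) * Matrix.diagonal dd := by
        ext k j
        rw [Matrix.mul_diagonal]
        simp only [Matrix.map_apply, Matrix.of_apply]
        rw [hddeq j (w k)]
        ring
      have hVπ : (Matrix.of fun k j : Fin m => vv (π j) (w k)).det = 0 := by
        have h2 : ((Matrix.of fun k j : Fin m => vv (s j) (w k)).map σ).det = 0 := by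
          have h3 := RingHom.map_det (σ.toAlgHom.toRingHom)
            (Matrix.of fun k j : Fin m => vv (s j) (w k))
          rw [RingHom.mapMatrix_apply] at h3
          have hco : (⇑σ.toAlgHom.toRingHom : L → L) = ⇑σ := rfl
          rw [hco] at h3
          rw [← h3, hVs, map_zero]
        rw [hmapσ, Matrix.det_mul, Matrix.det_diagonal] at h2
        rcases mul_eq_zero.mp h2 with h | h
        · exact h
        · exact absurd h (Finset.prod_ne_zero_iff.mpr fun j _ => hdd0 j)
      -- permute columns to compare with `t`
      have hVt : (Matrix.of fun k j : Fin m => vv (t j) (w k)).det = 0 := by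
        have hsub : (Matrix.of fun k j : Fin m => vv (π j) (w k))
            = (Matrix.of fun k j : Fin m => vv (t j) (w k)).submatrix id ⇑e := by
          ext k j
          simp only [Matrix.submatrix_apply, Matrix.of_apply, id_eq]
          rw [show e j = τ j from rfl, hτ j]
        rw [hsub, Matrix.det_permute'] at hVπ
        rcases mul_eq_zero.mp hVπ with h | h
        · exfalso
          rcases Int.units_eq_one_or (Equiv.Perm.sign e) with h1 | h1 <;>
            rw [h1] at h <;> simp at h
        · exact h
      rw [hscale t ht0, hVt, map_zero, zero_mul]
    -- linear dependence of the rows of `U` on the nonzero columns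
    have hhyp : ∀ t : Fin m → {j : Fin n // j ≠ 0},
        (((Matrix.of fun (k : Fin m) (j : {j : Fin n // j ≠ 0}) =>
          U (w k) j.1)).submatrix id t).det = 0 := by
      intro tt
      by_cases hti : Function.Injective tt
      · have hvalinj : Function.Injective (fun k => (tt k).1) := by
          intro a b hab
          exact hti (Subtype.ext hab)
        have h1 := htransA (fun k => (tt k).1) hvalinj (fun k => (tt k).2)
        have heqm : (Matrix.of fun (k : Fin m) (j : {j : Fin n // j ≠ 0}) =>
              U (w k) j.1).submatrix id tt
            = U.submatrix w (fun k => (tt k).1) := by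
          ext k j
          simp [Matrix.submatrix_apply]
        rw [heqm]
        exact h1
      · obtain ⟨x, y, hxy, hne⟩ := Function.not_injective_iff.mp hti
        refine Matrix.det_zero_of_column_eq hne fun k => ?_
        simp [Matrix.submatrix_apply, hxy]
    obtain ⟨a, ha0, haeq⟩ := aux_LD _ hhyp
    have hgz : ∀ j : Fin n, j ≠ 0 → ∑ k, a k * U (w k) j = 0 := by
      intro j hj
      have := haeq ⟨j, hj⟩
      simpa using this
    have hmlt : m < n := by
      have hmle : m ≤ n := by
        have := Fintype.card_le_of_injective w hw
        simpa using this
      rcases hmle.lt_or_eq with h | h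
      · exact h
      · exfalso
        subst h
        obtain ⟨k, hk⟩ := (Finite.injective_iff_surjective.mp hs) 0
        exact hz k hk
    obtain ⟨v₀, hv₀⟩ : ∃ v₀, ∀ k, w k ≠ v₀ := by
      by_contra hcon
      push_neg at hcon
      have hsurj : Function.Surjective w := fun v => hcon v
      have := Fintype.card_le_of_surjective w hsurj
      simp only [Fintype.card_fin] at this
      omega
    have hbconst : ∀ v, (∑ k, a k * (if w k = v then (1:ℝ) else 0))
        = (∑ k, a k * U (w k) 0) * U v 0 := by
      intro v
      rw [hbrep a v, Finset.sum_eq_single 0]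
      · intro j _ hj
        rw [hgz j hj, zero_mul]
      · intro hmem
        exact absurd (Finset.mem_univ _) hmem
    have hb₀ : (∑ k, a k * (if w k = v₀ then (1:ℝ) else 0)) = 0 := by
      apply Finset.sum_eq_zero
      intro k _
      rw [if_neg (hv₀ k), mul_zero]
    have hg0 : ∑ k, a k * U (w k) 0 = 0 := by
      have h1 := (hbconst v₀).symm.trans hb₀
      rcases mul_eq_zero.mp h1 with h | h
      · exact h
      · exact absurd h (hU00ne v₀)
    have hall : ∀ j, ∑ k, a k * U (w k) j = 0 := by
      intro j
      by_cases hj : j = 0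
      · rw [hj]; exact hg0
      · exact hgz j hj
    exact ha0 (hend a hall)
  case pos =>
    obtain ⟨j0, hj0⟩ := hz
    have hm0 : m ≠ 0 := by
      rintro rfl
      exact j0.elim0
    obtain ⟨m', rfl⟩ : ∃ m', m = m' + 1 := ⟨m - 1, by omega⟩
    have hsnz : ∀ k, k ≠ j0 → s k ≠ 0 := by
      intro k hk h0
      exact hk (hs (h0.trans hj0.symm))
    -- scaling identity with the constant column at position j0
    have hscaleB : ∀ t : Fin (m' + 1) → Fin n, t j0 = 0 → (∀ k, k ≠ j0 → t k ≠ 0) →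
        (U.submatrix w t).det
          = ι ((Matrix.of fun k j : Fin (m' + 1) =>
              if j = j0 then 1 else vv (t j) (w k)).det)
            * ∏ j, (if j = j0 then (Real.sqrt n)⁻¹ else (cc (t j))⁻¹) := by
      intro t ht0 htn
      have hmat : U.submatrix w t
          = ((Matrix.of fun k j : Fin (m' + 1) =>
                if j = j0 then 1 else vv (t j) (w k)).map ι)
              * Matrix.diagonal (fun j => if j = j0 then (Real.sqrt n)⁻¹
                  else (cc (t j))⁻¹) := by
        ext k j
        rw [Matrix.mul_diagonal]
        simp only [Matrix.map_apply, Matrix.submatrix_apply, Matrix.of_apply]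
        by_cases hj : j = j0
        · rw [if_pos hj, if_pos hj, hj, ht0, _root_.map_one, one_mul, hU0, one_div]
        · rw [if_neg hj, if_neg hj, (hcc (t j) (htn j hj)).2 (w k)]
          field_simp
          rw [mul_div_cancel_right₀ _ (hcc (t j) (htn j hj)).1]
      rw [hmat, Matrix.det_mul, Matrix.det_diagonal]
      congr 1
      rw [RingHom.map_det ι, RingHom.mapMatrix_apply]
    -- Galois transfer
    have htransB : ∀ t : Fin (m' + 1) → Fin n, Function.Injective t → t j0 = 0 →
        (U.submatrix w t).det = 0 := by
      intro t htinj ht0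
      have htn : ∀ k, k ≠ j0 → t k ≠ 0 := by
        intro k hk h0
        exact hk (htinj (h0.trans ht0.symm))
      set S : Finset (Fin n) := (Finset.univ.image s).erase 0 with hSdef
      set S' : Finset (Fin n) := (Finset.univ.image t).erase 0 with hS'def
      have hS0 : (0 : Fin n) ∉ S := Finset.notMem_erase _ _
      have hS'0 : (0 : Fin n) ∉ S' := Finset.notMem_erase _ _
      have hcards : S.card = S'.card := by
        rw [hSdef, hS'def, Finset.card_erase_of_mem, Finset.card_erase_of_mem]
        · rw [Finset.card_image_of_injective _ hs, Finset.card_image_of_injective _ htinj]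
        · rw [← ht0]
          exact Finset.mem_image_of_mem _ (Finset.mem_univ j0)
        · rw [← hj0]
          exact Finset.mem_image_of_mem _ (Finset.mem_univ j0)
      obtain ⟨σ, hσ⟩ := hhom S S' hS0 hS'0 hcards
      have hπex : ∀ k : Fin (m' + 1), ∃ j : Fin n,
          (k = j0 → j = 0) ∧ (k ≠ j0 → j ∈ S' ∧ σ (lamL (s k)) = lamL j) := by
        intro k
        by_cases hk : k = j0
        · exact ⟨0, fun _ => rfl, fun h => absurd hk h⟩
        · have h1 : s k ∈ S := by
            rw [hSdef]
            exact Finset.mem_erase.mpr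
              ⟨hsnz k hk, Finset.mem_image_of_mem _ (Finset.mem_univ k)⟩
          have h2 : σ (lamL (s k)) ∈ (S.image lamL).image σ :=
            Finset.mem_image_of_mem _ (Finset.mem_image_of_mem _ h1)
          rw [hσ] at h2
          obtain ⟨j, hj1, hj2⟩ := Finset.mem_image.mp h2
          exact ⟨j, fun h => absurd h hk, fun _ => ⟨hj1, hj2.symm⟩⟩
      choose π hπ0 hπS using hπex
      have hπj0 : π j0 = 0 := hπ0 j0 rfl
      have hπinj : Function.Injective π := by
        intro k k' hkk
        by_cases hk : k = j0 <;> by_cases hk' : k' = j0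
        · rw [hk, hk']
        · exfalso
          rw [hk, hπj0] at hkk
          have h1 : π k' ∈ S' := (hπS k' hk').1
          rw [← hkk] at h1
          exact hS'0 h1
        · exfalso
          rw [hk', hπj0] at hkk
          have h1 : π k ∈ S' := (hπS k hk).1
          rw [hkk] at h1
          exact hS'0 h1
        · have h1 : σ (lamL (s k)) = σ (lamL (s k')) := by
            rw [(hπS k hk).2, (hπS k' hk').2, hkk]
          exact hs (hlamLinj (σ.injective h1))
      have hπmem : ∀ k, π k ∈ Finset.univ.image t := by
        intro k
        by_cases hk : k = j0
        · rw [hk, hπj0, ← ht0]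
          exact Finset.mem_image_of_mem _ (Finset.mem_univ j0)
        · have h1 := (hπS k hk).1
          rw [hS'def] at h1
          exact Finset.mem_of_mem_erase h1
      have hτex : ∀ k, ∃ k', t k' = π k := by
        intro k
        obtain ⟨k', -, hk'⟩ := Finset.mem_image.mp (hπmem k)
        exact ⟨k', hk'⟩
      choose τ hτ using hτex
      have hτinj : Function.Injective τ := by
        intro a b hab
        apply hπinj
        rw [← hτ, ← hτ, hab]
      have hτbij : Function.Bijective τ := Finite.injective_iff_bijective.mp hτinj
      set e : Equiv.Perm (Fin (m' + 1)) := Equiv.ofBijective τ hτbij with he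
      have hτj0 : τ j0 = j0 := by
        apply htinj
        rw [hτ j0, hπj0, ht0]
      have hddex : ∀ k : Fin (m' + 1), ∃ d : L, k ≠ j0 →
          (d ≠ 0 ∧ ∀ x, σ (vv (s k) x) = d * vv (π k) x) := by
        intro k
        by_cases hk : k = j0
        · exact ⟨1, fun h => absurd hk h⟩
        · have hπknz : π k ≠ 0 := by
            intro h0
            apply hS'0
            rw [← h0]
            exact (hπS k hk).1
          obtain ⟨d, hd0, hdeq⟩ := hprop σ (s k) (π k) (hsnz k hk) hπknz (hπS k hk).2
          exact ⟨d, fun _ => ⟨hd0, hdeq⟩⟩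
      choose dd hdd using hddex
      have hprodB : (∏ j, (if j = j0 then (Real.sqrt n)⁻¹ else (cc (s j))⁻¹)) ≠ 0 := by
        apply Finset.prod_ne_zero_iff.mpr
        intro j _
        by_cases hj : j = j0
        · rw [if_pos hj]
          exact inv_ne_zero hsqrt
        · rw [if_neg hj]
          exact inv_ne_zero (hcc (s j) (hsnz j hj)).1
      have hWs : (Matrix.of fun k j : Fin (m' + 1) =>
          if j = j0 then 1 else vv (s j) (w k)).det = 0 := by
        have h1 := hscaleB s hj0 hsnz
        rw [hdet0] at h1
        rcases mul_eq_zero.mp h1.symm with h | h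
        · apply hιinj
          rw [h, map_zero]
        · exact absurd h hprodB
      have hmapσ : (Matrix.of fun k j : Fin (m' + 1) =>
            if j = j0 then 1 else vv (s j) (w k)).map σ
          = (Matrix.of fun k j : Fin (m' + 1) => if j = j0 then 1 else vv (π j) (w k))
              * Matrix.diagonal (fun j => if j = j0 then 1 else dd j) := by
        ext k j
        rw [Matrix.mul_diagonal]
        simp only [Matrix.map_apply, Matrix.of_apply]
        by_cases hj : j = j0
        · rw [if_pos hj, if_pos hj, if_pos hj, _root_.map_one, mul_one]
        · rw [if_neg hj, if_neg hj, if_neg hj, ((hdd j hj).2) (w k)]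
          ring
      have hWπ : (Matrix.of fun k j : Fin (m' + 1) =>
          if j = j0 then 1 else vv (π j) (w k)).det = 0 := by
        have h3 := RingHom.map_det (σ.toAlgHom.toRingHom)
          (Matrix.of fun k j : Fin (m' + 1) => if j = j0 then 1 else vv (s j) (w k))
        rw [RingHom.mapMatrix_apply] at h3
        have hco : (⇑σ.toAlgHom.toRingHom : L → L) = ⇑σ := rfl
        rw [hco] at h3
        have h2 : ((Matrix.of fun k j : Fin (m' + 1) =>
            if j = j0 then 1 else vv (s j) (w k)).map σ).det = 0 := by
          rw [← h3, hWs, map_zero]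
        rw [hmapσ, Matrix.det_mul, Matrix.det_diagonal] at h2
        rcases mul_eq_zero.mp h2 with h | h
        · exact h
        · exfalso
          apply absurd h
          apply Finset.prod_ne_zero_iff.mpr
          intro j _
          by_cases hj : j = j0
          · rw [if_pos hj]
            exact one_ne_zero
          · rw [if_neg hj]
            exact (hdd j hj).1
      have hWt : (Matrix.of fun k j : Fin (m' + 1) =>
          if j = j0 then 1 else vv (t j) (w k)).det = 0 := by
        have hsub : (Matrix.of fun k j : Fin (m' + 1) =>
              if j = j0 then 1 else vv (π j) (w k))
            = (Matrix.of fun k j : Fin (m' + 1) =>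
                if j = j0 then 1 else vv (t j) (w k)).submatrix id ⇑e := by
          ext k j
          simp only [Matrix.submatrix_apply, Matrix.of_apply, id_eq]
          have hej : (e j = j0) ↔ (j = j0) := by
            constructor
            · intro h
              apply e.injective
              rw [h, show e j0 = τ j0 from rfl, hτj0]
            · intro h
              rw [h, show e j0 = τ j0 from rfl, hτj0]
          by_cases hj : j = j0
          · rw [if_pos hj, if_pos (hej.mpr hj)]
          · rw [if_neg hj, if_neg (fun h => hj (hej.mp h)), show e j = τ j from rfl, hτ j]
        rw [hsub, Matrix.det_permute'] at hWπ
        rcases mul_eq_zero.mp hWπ with h | h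
        · exfalso
          rcases Int.units_eq_one_or (Equiv.Perm.sign e) with h1 | h1 <;>
            rw [h1] at h <;> simp at h
        · exact h
      rw [hscaleB t ht0 htn, hWt, map_zero, zero_mul]
    -- all minors containing column 0 vanish
    have htransB2 : ∀ t : Fin (m' + 1) → Fin n, Function.Injective t → (∃ k, t k = 0) →
        (U.submatrix w t).det = 0 := by
      rintro t htinj ⟨j1, hj1⟩
      have h1 := htransB (t ∘ Equiv.swap j0 j1)
        (htinj.comp (Equiv.swap j0 j1).injective)
        (by simp [Equiv.swap_apply_left, hj1])
      have h2 : U.submatrix w (t ∘ Equiv.swap j0 j1)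
          = (U.submatrix w t).submatrix id ⇑(Equiv.swap j0 j1) := by
        ext k j
        simp [Matrix.submatrix_apply]
      rw [h2, Matrix.det_permute'] at h1
      rcases mul_eq_zero.mp h1 with h | h
      · exfalso
        rcases Int.units_eq_one_or (Equiv.Perm.sign (Equiv.swap j0 j1)) with h3 | h3 <;>
          rw [h3] at h <;> simp at h
      · exact h
    have hH3 : ∀ t' : Fin m' → Fin n, (U.submatrix w (Fin.cons 0 t')).det = 0 := by
      intro t'
      by_cases hinj : Function.Injective (Fin.cons 0 t' : Fin (m' + 1) → Fin n)
      · refine htransB2 _ hinj ⟨0, ?_⟩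
        simp
      · obtain ⟨x, y, hxy, hne⟩ := Function.not_injective_iff.mp hinj
        refine Matrix.det_zero_of_column_eq hne fun k => ?_
        simp [Matrix.submatrix_apply, hxy]
    -- all minors of the difference matrix vanish
    have hCdet : ∀ t' : Fin m' → Fin n,
        ((Matrix.of fun (k : Fin m') (j : Fin n) =>
          U (w k.succ) j - U (w 0) j).submatrix id t').det = 0 := by
      intro t'
      set M : Matrix (Fin (m' + 1)) (Fin (m' + 1)) ℝ := U.submatrix w (Fin.cons 0 t') with hM
      set M' : Matrix (Fin (m' + 1)) (Fin (m' + 1)) ℝ :=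
        Matrix.of fun i j => if i = 0 then M i j else M i j - M 0 j with hM'
      have hdetMM' : M.det = M'.det := by
        apply Matrix.det_eq_of_forall_row_eq_smul_add_const
          (fun i => if i = 0 then (0:ℝ) else 1) 0 (if_pos rfl)
        intro i j
        by_cases hi : i = 0
        · rw [hi]
          simp [hM']
        · have h4 : M' i j = M i j - M 0 j := by simp [hM', hi]
          have h5 : M' 0 j = M 0 j := by simp [hM']
          rw [h4, h5, if_neg hi]
          ring
      have h00 : M' 0 0 = 1 / Real.sqrt n := by
        simp [hM', hM, Matrix.submatrix_apply, hU0]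
      have hzero : ∀ i : Fin (m' + 1), i ≠ 0 → M' i 0 = 0 := by
        intro i hi
        have h4 : M' i 0 = M i 0 - M 0 0 := by simp [hM', hi]
        rw [h4, hM]
        simp [Matrix.submatrix_apply, Fin.cons_zero, hU0]
      have hsubm : M'.submatrix ((0 : Fin (m' + 1)).succAbove) Fin.succ
          = (Matrix.of fun (k : Fin m') (j : Fin n) =>
              U (w k.succ) j - U (w 0) j).submatrix id t' := by
        ext k j
        simp [hM', hM, Matrix.submatrix_apply, Fin.zero_succAbove, Fin.succ_ne_zero,
          Fin.cons_succ]
      have hexp : M'.det = (1 / Real.sqrt n) *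
          ((Matrix.of fun (k : Fin m') (j : Fin n) =>
            U (w k.succ) j - U (w 0) j).submatrix id t').det := by
        rw [Matrix.det_succ_column_zero]
        rw [Finset.sum_eq_single (0 : Fin (m' + 1))
          (fun i _ hi => by rw [hzero i hi, mul_zero, zero_mul])
          (fun hmem => absurd (Finset.mem_univ _) hmem)]
        rw [h00, hsubm]
        simp
      have h0 := hH3 t'
      rw [← hM, hdetMM', hexp] at h0
      rcases mul_eq_zero.mp h0 with h | h
      · exact absurd h (one_div_ne_zero hsqrt)
      · exact h
    obtain ⟨a', ha'0, ha'⟩ := aux_LD (Matrix.of fun (k : Fin m') (j : Fin n) =>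
      U (w k.succ) j - U (w 0) j) hCdet
    set a : Fin (m' + 1) → ℝ := Fin.cons (-∑ k, a' k) a' with ha
    have hall : ∀ j, ∑ k, a k * U (w k) j = 0 := by
      intro j
      have h1 := ha' j
      simp only [Matrix.of_apply] at h1
      have h2 : ∑ k, a' k * U (w k.succ) j = (∑ k, a' k) * U (w 0) j := by
        have h3 : ∑ k, (a' k * U (w k.succ) j - a' k * U (w 0) j) = 0 := by
          rw [← h1]
          exact Finset.sum_congr rfl fun k _ => by ring
        rw [Finset.sum_sub_distrib] at h3
        rw [Finset.sum_mul]
        linarith [h3]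
      rw [Fin.sum_univ_succ]
      simp only [ha, Fin.cons_zero, Fin.cons_succ]
      rw [h2]
      ring
    have ha0 : a ≠ 0 := by
      obtain ⟨k₀, hk₀⟩ : ∃ k, a' k ≠ 0 := by
        by_contra hcon
        push_neg at hcon
        exact ha'0 (funext hcon)
      intro h0
      apply hk₀
      have h1 := congrFun h0 k₀.succ
      simpa [ha, Fin.cons_succ] using h1
    exact ha0 (hend a hall)
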